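/- Let G be a graph and AP its set of acyclic paths (considered up to reversal), with the closure operator generated by concatenation of composable acyclic paths. If X ⊆ AP is biclosed, p ∈ X, and p = q ∘ q' is a decomposition into composable acyclic paths, then q ∈ X or q' ∈ X; consequently the poset Bic(AP) of biclosed sets is ordered by single-step inclusion: if X, Y are biclosed with X ⊊ Y, there exists p₀ ∈ Y \ X such that X ∪ {p₀} is biclosed. -/

import Mathlib

variable {V : Type*}

/-- A list of vertices is an acyclic path in `G`: it is nonempty, consecutive
vertices are adjacent, and vertices at distance `≥ 2` along the path are
non-adjacent. -/
def IsAcyclicPath (G : SimpleGraph V) (l : List V) : Prop :=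
  l ≠ [] ∧ l.Chain' G.Adj ∧
    ∀ (i j : ℕ) (hi : i < l.length) (hj : j < l.length),
      i + 2 ≤ j → ¬ G.Adj (l.get ⟨i, hi⟩) (l.get ⟨j, hj⟩)

/-- The set of acyclic paths of `G`. -/
def AP (G : SimpleGraph V) : Set (List V) := {l | IsAcyclicPath G l}

/-- A set of paths closed under reversal (paths are considered up to reversal). -/
def RevClosed (X : Set (List V)) : Prop := ∀ l ∈ X, l.reverse ∈ X

/-- A set of acyclic paths closed under concatenation: if `p, p' ∈ X` and
`p ∘ p'` is an acyclic path, then `p ∘ p' ∈ X`. -/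
def PathClosed (G : SimpleGraph V) (X : Set (List V)) : Prop :=
  ∀ p ∈ X, ∀ q ∈ X, IsAcyclicPath G (p ++ q) → p ++ q ∈ X

/-- A biclosed set of acyclic paths (invariant under reversal): both `X` and its
complement in `AP` are closed. -/
def PathBiclosed (G : SimpleGraph V) (X : Set (List V)) : Prop :=
  X ⊆ AP G ∧ RevClosed X ∧ PathClosed G X ∧ PathClosed G (AP G \ X)

/-- The closure of a set of acyclic paths: the smallest closed set containing it. -/
def PathClosure (G : SimpleGraph V) (S : Set (List V)) : Set (List V) :=
  ⋂₀ {T | S ⊆ T ∧ PathClosed G T}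

variable {G : SimpleGraph V}

lemma ap_append_left {a b : List V} (h : IsAcyclicPath G (a ++ b)) (ha : a ≠ []) :
    IsAcyclicPath G a := by
  obtain ⟨-, hc, hn⟩ := h
  refine ⟨ha, (List.isChain_append.mp hc).1, ?_⟩
  intro i j hi hj hij
  have hi' : i < (a ++ b).length := by simp; omega
  have hj' : j < (a ++ b).length := by simp; omega
  have := hn i j hi' hj' hij
  simp only [List.get_eq_getElem] at this ⊢
  rwa [List.getElem_append_left hi, List.getElem_append_left hj] at this

lemma ap_append_right {a b : List V} (h : IsAcyclicPath G (a ++ b)) (hb : b ≠ []) :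
    IsAcyclicPath G b := by
  obtain ⟨-, hc, hn⟩ := h
  refine ⟨hb, (List.isChain_append.mp hc).2.1, ?_⟩
  intro i j hi hj hij
  have hi' : a.length + i < (a ++ b).length := by simp; omega
  have hj' : a.length + j < (a ++ b).length := by simp; omega
  have := hn (a.length + i) (a.length + j) hi' hj' (by omega)
  simp only [List.get_eq_getElem] at this ⊢
  rw [List.getElem_append_right (by omega), List.getElem_append_right (by omega)] at this
  simpa using this

lemma ap_reverse {l : List V} (h : IsAcyclicPath G l) : IsAcyclicPath G l.reverse := by
  obtain ⟨hne, hc, hn⟩ := h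
  refine ⟨by simpa using hne, List.isChain_reverse.mpr (hc.imp fun a b hab => hab.symm), ?_⟩
  intro i j hi hj hij
  simp only [List.length_reverse] at hi hj
  have h1 : l.length - 1 - j < l.length := by omega
  have h2 : l.length - 1 - i < l.length := by omega
  have := hn (l.length - 1 - j) (l.length - 1 - i) h1 h2 (by omega)
  simp only [List.get_eq_getElem, List.getElem_reverse]
  intro hadj
  exact this hadj.symm

lemma adj_junction {a b : List V} (hc : (a ++ b).Chain' G.Adj) (ha : a ≠ []) (hb : b ≠ []) :
    G.Adj (a.getLast ha) (b.head hb) := by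
  obtain ⟨-, -, hj⟩ := List.isChain_append.mp hc
  exact hj _ (List.getLast?_eq_getLast ha ▸ rfl) _ (List.head?_eq_head hb ▸ rfl)

lemma get_congr {α : Type*} {l : List α} {i j : ℕ} (hi : i < l.length) (hj : j < l.length)
    (h : i = j) : l.get ⟨i, hi⟩ = l.get ⟨j, hj⟩ := by subst h; rfl

lemma not_ap_self_append {u : List V} (hu : IsAcyclicPath G u) :
    ¬ IsAcyclicPath G (u ++ u) := by
  intro h
  obtain ⟨hne, hc, hn⟩ := h
  rcases u with - | ⟨x, t⟩
  · exact hu.1 rfl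
  rcases t with - | ⟨y, t⟩
  · have hadj : G.Adj x x := by
      simpa using adj_junction hc (show [x] ≠ [] by simp) (show [x] ≠ [] by simp)
    exact G.irrefl hadj
  · set l := x :: y :: t with hl
    have hlen : 2 ≤ l.length := by simp [hl]
    have h0 : (0 : ℕ) < (l ++ l).length := by simp; omega
    have h1 : l.length + 1 < (l ++ l).length := by simp; omega
    have hthis := hn 0 (l.length + 1) h0 h1 (by omega)
    simp only [List.get_eq_getElem] at hthis
    rw [List.getElem_append_left (by omega), List.getElem_append_right (by omega)] at hthis
    apply hthis
    have hadj := List.isChain_iff_getElem.mp hu.2.1 0 (by simp [hl])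
    convert hadj using 2
    omega

lemma ap_length_le [Fintype V] {l : List V} (h : IsAcyclicPath G l) :
    l.length ≤ Fintype.card V + 1 := by
  obtain ⟨hne, hc, hn⟩ := h
  by_contra hlen
  push_neg at hlen
  have hchain := List.isChain_iff_getElem.mp hc
  have key : ∀ k1 k2 : Fin (l.length - 1), (k1 : ℕ) < (k2 : ℕ) →
      l.get ⟨k1, by omega⟩ = l.get ⟨k2, by omega⟩ → False := by
    intro k1 k2 hlt heq
    rcases eq_or_lt_of_le (Nat.succ_le_of_lt hlt) with he | hgt
    · have hadj : G.Adj (l.get ⟨k1, by omega⟩) (l.get ⟨(k1 : ℕ) + 1, by omega⟩) := hchain k1 (by omega)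
      have e2 : l.get ⟨(k1 : ℕ) + 1, by omega⟩ = l.get ⟨(k2 : ℕ), by omega⟩ :=
        get_congr _ _ he
      exact G.irrefl (heq ▸ e2 ▸ hadj)
    · have hadj : G.Adj (l.get ⟨k2, by omega⟩) (l.get ⟨(k2 : ℕ) + 1, by omega⟩) := hchain k2 (by omega)
      have hnadj := hn k1 ((k2 : ℕ) + 1) (by omega) (by omega) (by omega)
      exact hnadj (heq.symm ▸ hadj)
  have hinj : Function.Injective (fun k : Fin (l.length - 1) => l.get ⟨k, by omega⟩) := by
    intro k1 k2 heq
    by_contra hne'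
    rcases lt_trichotomy (k1 : ℕ) (k2 : ℕ) with h | h | h
    · exact key k1 k2 h heq
    · exact hne' (Fin.ext h)
    · exact key k2 k1 h heq.symm
  have := Fintype.card_le_of_injective _ hinj
  simp at this
  omega

lemma not_ap_append_reverse {u : List V} (hu : u ≠ []) :
    ¬ IsAcyclicPath G (u ++ u.reverse) := by
  intro h
  have hadj := adj_junction h.2.1 hu (by simpa using hu)
  rw [List.head_reverse] at hadj
  exact G.irrefl hadj

lemma not_ap_reverse_append {u : List V} (hu : u ≠ []) :
    ¬ IsAcyclicPath G (u.reverse ++ u) := by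
  intro h
  have hadj := adj_junction h.2.1 (by simpa using hu) hu
  rw [List.getLast_reverse] at hadj
  exact G.irrefl hadj


lemma factor_mem {X : Set (List V)} (hX : PathBiclosed G X)
    {p a b : List V} (hp : p ∈ X) (heq : p = a ++ b)
    (ha : IsAcyclicPath G a) (hb : IsAcyclicPath G b) : a ∈ X ∨ b ∈ X := by
  by_contra hcon
  push_neg at hcon
  have hap : IsAcyclicPath G (a ++ b) := heq ▸ hX.1 hp
  have hmem : a ++ b ∈ AP G \ X :=
    hX.2.2.2 a ⟨ha, hcon.1⟩ b ⟨hb, hcon.2⟩ hap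
  exact hmem.2 (heq ▸ hp)


/-- If `X ⊆ AP` is biclosed, `p ∈ X` and `p = q ∘ q'` is a
decomposition into composable acyclic paths, then `q ∈ X` or `q' ∈ X`.
Consequently `Bic(AP)` is ordered by single-step inclusion: if `X ⊊ Y` are
biclosed there is `p₀ ∈ Y \ X` with `X ∪ {p₀}` (up to reversal) biclosed. -/
theorem stmt10 [Fintype V] (G : SimpleGraph V) :
    (∀ X : Set (List V), PathBiclosed G X → ∀ p q q' : List V, p ∈ X →
      p = q ++ q' → IsAcyclicPath G q → IsAcyclicPath G q' → q ∈ X ∨ q' ∈ X) ∧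
    (∀ X Y : Set (List V), PathBiclosed G X → PathBiclosed G Y → X ⊂ Y →
      ∃ p₀ ∈ Y \ X, PathBiclosed G (X ∪ {p₀, p₀.reverse})) := by
  constructor
  · intro X hX p q q' hp heq hq hq'
    exact factor_mem hX hp heq hq hq'
  intro X Y hX hY hXY
  have hXsub : X ⊆ Y := hXY.1
  set S : Set (List V) := {s | s ∈ Y ∧ s ∉ X ∧
    ∀ a b : List V, a ≠ [] → b ≠ [] → s = a ++ b → a ∈ X ∨ b ∈ X} with hSdef
  obtain ⟨w, hwY, hwX⟩ := Set.not_subset.mp hXY.2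
  have hTne : {n | ∃ u, (u ∈ Y ∧ u ∉ X) ∧ u.length = n}.Nonempty :=
    ⟨w.length, w, ⟨hwY, hwX⟩, rfl⟩
  obtain ⟨m, ⟨hmY, hmX⟩, hmlen⟩ := Nat.sInf_mem hTne
  have hmin : ∀ u, u ∈ Y → u ∉ X → m.length ≤ u.length := fun u h1 h2 =>
    hmlen ▸ Nat.sInf_le ⟨u, ⟨h1, h2⟩, rfl⟩
  have hmS : m ∈ S := by
    refine ⟨hmY, hmX, ?_⟩
    intro a b hane hbne heq
    have hmap : IsAcyclicPath G m := hY.1 hmY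
    have ha : IsAcyclicPath G a := ap_append_left (heq ▸ hmap) hane
    have hb : IsAcyclicPath G b := ap_append_right (heq ▸ hmap) hbne
    have hlena : a.length < m.length := by
      rw [heq, List.length_append]
      have := List.length_pos_iff.mpr hbne; omega
    have hlenb : b.length < m.length := by
      rw [heq, List.length_append]
      have := List.length_pos_iff.mpr hane; omega
    rcases factor_mem hY hmY heq ha hb with h | h
    · left; by_contra hax
      exact absurd (hmin a h hax) (by omega)
    · right; by_contra hbx
      exact absurd (hmin b h hbx) (by omega)
  have hbdd : BddAbove {n | ∃ s ∈ S, s.length = n} :=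
    ⟨Fintype.card V + 1, by rintro n ⟨s, hs, rfl⟩; exact ap_length_le (hY.1 hs.1)⟩
  have hSTne : {n | ∃ s ∈ S, s.length = n}.Nonempty := ⟨m.length, m, hmS, rfl⟩
  obtain ⟨p₀, hp₀S, hp₀len⟩ := Nat.sSup_mem hSTne hbdd
  have hmax : ∀ s ∈ S, s.length ≤ p₀.length := fun s hs =>
    hp₀len ▸ le_csSup hbdd ⟨s, hs, rfl⟩
  have hSrev : ∀ s ∈ S, s.reverse ∈ S := by
    rintro s ⟨hsY, hsX, hsplit⟩
    refine ⟨hY.2.1 s hsY, fun hcon => hsX ?_, ?_⟩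
    · have := hX.2.1 _ hcon; rwa [List.reverse_reverse] at this
    · intro a b hane hbne heqr
      have heq : s = b.reverse ++ a.reverse := by
        rw [← List.reverse_append, ← heqr, List.reverse_reverse]
      rcases hsplit _ _ (by simpa using hbne) (by simpa using hane) heq with h | h
      · right; have := hX.2.1 _ h; rwa [List.reverse_reverse] at this
      · left; have := hX.2.1 _ h; rwa [List.reverse_reverse] at this
  have key : ∀ n : ℕ, ∀ p, p.length ≤ n → p ∈ X → ∀ s ∈ S, p₀.length ≤ s.length →
      IsAcyclicPath G (p ++ s) → p ++ s ∈ X := by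
    intro n
    induction n with
    | zero =>
      intro p hlen hp s _ _ _
      exfalso
      have h1 : p ≠ [] := (hX.1 hp).1
      have := List.length_pos_iff.mpr h1
      omega
    | succ n ih =>
      intro p hlen hp s hsS hslen hap
      by_contra hcon
      have hps : p ++ s ∈ S := by
        refine ⟨hY.2.2.1 p (hXsub hp) s hsS.1 hap, hcon, ?_⟩
        intro a b hane hbne heq
        rcases List.append_eq_append_iff.mp heq with ⟨c, hac, hsc⟩ | ⟨c, hpc, hbc⟩
        · -- a = p ++ c, s = c ++ b
          by_cases hc : c = []
          · left; rw [hac, hc, List.append_nil]; exact hp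
          · rcases hsS.2.2 c b hc hbne hsc with h | h
            · left
              have hap2 : IsAcyclicPath G (a ++ b) := heq ▸ hap
              have haap : IsAcyclicPath G a := ap_append_left hap2 hane
              rw [hac] at haap ⊢
              exact hX.2.2.1 p hp c h haap
            · right; exact h
        · -- p = a ++ c, b = c ++ s
          by_cases hc : c = []
          · left; rw [hc, List.append_nil] at hpc; exact hpc ▸ hp
          · have hpap : IsAcyclicPath G p := hX.1 hp
            have haap : IsAcyclicPath G a := ap_append_left (hpc ▸ hpap) hane
            have hcap : IsAcyclicPath G c := ap_append_right (hpc ▸ hpap) hc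
            rcases factor_mem hX hp hpc haap hcap with h | h
            · left; exact h
            · right
              have hbap : IsAcyclicPath G b := ap_append_right (heq ▸ hap) hbne
              rw [hbc] at hbap ⊢
              have hclen : c.length ≤ n := by
                have e1 : p.length = a.length + c.length := by rw [hpc]; simp
                have e2 := List.length_pos_iff.mpr hane
                omega
              exact ih c hclen h s hsS hslen hbap
      have hle := hmax _ hps
      have h1 := List.length_pos_iff.mpr ((hX.1 hp).1 : p ≠ [])
      rw [List.length_append] at hle
      omega
  refine ⟨p₀, ⟨hp₀S.1, hp₀S.2.1⟩, ?_⟩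
  have hmemZ : ∀ l, l ∈ X ∪ ({p₀, p₀.reverse} : Set (List V)) ↔
      l ∈ X ∨ l = p₀ ∨ l = p₀.reverse := by
    intro l
    simp only [Set.mem_union, Set.mem_insert_iff, Set.mem_singleton_iff]
  have hp₀ap : IsAcyclicPath G p₀ := hY.1 hp₀S.1
  have hp₀ne : p₀ ≠ [] := hp₀ap.1
  have hrevS : p₀.reverse ∈ S := hSrev _ hp₀S
  have hrevlen : p₀.length ≤ p₀.reverse.length := by simp
  have comp1 : ∀ p ∈ X, ∀ s ∈ S, p₀.length ≤ s.length →
      IsAcyclicPath G (p ++ s) → p ++ s ∈ X :=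
    fun p hp s hs hlen hap => key p.length p le_rfl hp s hs hlen hap
  have comp2 : ∀ s ∈ S, p₀.length ≤ s.length → ∀ p ∈ X,
      IsAcyclicPath G (s ++ p) → s ++ p ∈ X := by
    intro s hs hlen p hp hap
    have h1 : IsAcyclicPath G (p.reverse ++ s.reverse) := by
      rw [← List.reverse_append]; exact ap_reverse hap
    have h2 := comp1 p.reverse (hX.2.1 p hp) s.reverse (hSrev s hs)
      (by simpa using hlen) h1
    have h3 := hX.2.1 _ h2
    rwa [List.reverse_append, List.reverse_reverse, List.reverse_reverse] at h3
  refine ⟨?_, ?_, ?_, ?_⟩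
  · -- subset of AP
    intro l hl
    rcases (hmemZ l).mp hl with h | h | h
    · exact hX.1 h
    · rw [h]; exact hp₀ap
    · rw [h]; exact ap_reverse hp₀ap
  · -- RevClosed
    intro l hl
    rcases (hmemZ l).mp hl with h | h | h
    · exact (hmemZ _).mpr (Or.inl (hX.2.1 l h))
    · rw [h]; exact (hmemZ _).mpr (Or.inr (Or.inr rfl))
    · rw [h]
      exact (hmemZ _).mpr (Or.inr (Or.inl (List.reverse_reverse p₀)))
  · -- PathClosed Z
    intro p hp q hq hap
    rcases (hmemZ p).mp hp with hpX | hpE | hpE <;>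
      rcases (hmemZ q).mp hq with hqX | hqE | hqE
    · exact (hmemZ _).mpr (Or.inl (hX.2.2.1 p hpX q hqX hap))
    · rw [hqE] at hap ⊢
      exact (hmemZ _).mpr (Or.inl (comp1 p hpX p₀ hp₀S le_rfl hap))
    · rw [hqE] at hap ⊢
      exact (hmemZ _).mpr (Or.inl (comp1 p hpX p₀.reverse hrevS hrevlen hap))
    · rw [hpE] at hap ⊢
      exact (hmemZ _).mpr (Or.inl (comp2 p₀ hp₀S le_rfl q hqX hap))
    · rw [hpE, hqE] at hap
      exact absurd hap (not_ap_self_append hp₀ap)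
    · rw [hpE, hqE] at hap
      exact absurd hap (not_ap_append_reverse hp₀ne)
    · rw [hpE] at hap ⊢
      exact (hmemZ _).mpr (Or.inl (comp2 p₀.reverse hrevS hrevlen q hqX hap))
    · rw [hpE, hqE] at hap
      exact absurd hap (not_ap_reverse_append hp₀ne)
    · rw [hpE, hqE] at hap
      exact absurd hap (not_ap_self_append (ap_reverse hp₀ap))
  · -- PathClosed complement
    intro p hp q hq hap
    have hpap : IsAcyclicPath G p := hp.1
    have hqap : IsAcyclicPath G q := hq.1
    have hpX : p ∈ AP G \ X := ⟨hp.1, fun h => hp.2 ((hmemZ p).mpr (Or.inl h))⟩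
    have hqX : q ∈ AP G \ X := ⟨hq.1, fun h => hq.2 ((hmemZ q).mpr (Or.inl h))⟩
    have hpq := hX.2.2.2 p hpX q hqX hap
    refine ⟨hpq.1, fun hcon => ?_⟩
    rcases (hmemZ _).mp hcon with h | h | h
    · exact hpq.2 h
    · rcases hp₀S.2.2 p q hpap.1 hqap.1 h.symm with hx | hx
      · exact hpX.2 hx
      · exact hqX.2 hx
    · rcases hrevS.2.2 p q hpap.1 hqap.1 h.symm with hx | hx
      · exact hpX.2 hx
      · exact hqX.2 hx
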